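/- Let N ≥ 3 and α > 0, and define ψ₀(y) = |y|^{−(N−2)α/(2(2+α))} ( 1 − |y|^{−2(N−2)/(2+α)} ) for |y| ≥ 1 (this is the stationary solution of Remark 2.6; the paper's displayed exponents contain a typo). Then: (a) for every y with |y| > 1, div( b(y) ∇ψ₀(y) ) + ((N−2)²α(4+α)/16) |y|^{−2} ψ₀(y) = 0; (b) with p_α = 2N(2+α)/(α(N−2)), for every ε > 0 one has ∫_{|y|>1} |ψ₀(y)|^{p_α+ε} dy < ∞, while ∫_{|y|>1} |ψ₀(y)|^{p_α} dy = ∞. -/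

import Mathlib

open MeasureTheory InnerProductSpace

local notation "⟪" x ", " y "⟫" => @inner ℝ _ _ x y

lemma grad_aux {n : ℕ} (a d : ℝ)
    (ψ : EuclideanSpace ℝ (Fin n) → ℝ)
    (hψ : ∀ y, ψ y = ‖y‖ ^ a - ‖y‖ ^ d)
    (z : EuclideanSpace ℝ (Fin n)) (hz : z ≠ 0) :
    HasGradientAt ψ
      ((a * (‖z‖ ^ 2) ^ (a / 2 - 1) - d * (‖z‖ ^ 2) ^ (d / 2 - 1)) • z) z := by
  have hz0 : ‖z‖ ≠ 0 := norm_ne_zero_iff.mpr hz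
  have hz2 : (0:ℝ) < ‖z‖ ^ 2 := by positivity
  set g : ℝ → ℝ := fun s => s ^ (a / 2) - s ^ (d / 2) with hg
  set q : EuclideanSpace ℝ (Fin n) → ℝ := fun y => ⟪y, y⟫ with hq
  have hψeq : ψ = g ∘ q := by
    funext y
    have h2 : (‖y‖ ^ 2 : ℝ) = ‖y‖ ^ ((2:ℕ) : ℝ) := (Real.rpow_natCast _ 2).symm
    have hpow : ∀ t : ℝ, (‖y‖ ^ 2 : ℝ) ^ t = ‖y‖ ^ (2 * t) := fun t => by
      rw [h2, ← Real.rpow_mul (norm_nonneg y)]; norm_num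
    simp only [hψ, hg, hq, Function.comp, real_inner_self_eq_norm_sq, hpow]
    ring_nf
  have hqd : HasFDerivAt q ((fderivInnerCLM ℝ (z, z)).comp
      ((ContinuousLinearMap.id ℝ (EuclideanSpace ℝ (Fin n))).prod
        (ContinuousLinearMap.id ℝ (EuclideanSpace ℝ (Fin n))))) z :=
    (hasFDerivAt_id z).inner ℝ (hasFDerivAt_id z)
  have hgd : HasDerivAt g (a / 2 * (‖z‖ ^ 2) ^ (a / 2 - 1) - d / 2 * (‖z‖ ^ 2) ^ (d / 2 - 1)) (q z) := by
    have h1 := (Real.hasDerivAt_rpow_const (x := ‖z‖ ^ 2) (p := a / 2) (Or.inl hz2.ne')).sub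
      (Real.hasDerivAt_rpow_const (x := ‖z‖ ^ 2) (p := d / 2) (Or.inl hz2.ne'))
    have hqz : q z = ‖z‖ ^ 2 := real_inner_self_eq_norm_sq z
    rw [hqz]; exact h1
  have hcomp := hgd.comp_hasFDerivAt z hqd
  rw [hψeq]
  rw [hasFDerivAt_iff_hasGradientAt] at hcomp
  convert hcomp using 1
  symm
  apply (toDual ℝ (EuclideanSpace ℝ (Fin n))).injective
  rw [LinearIsometryEquiv.apply_symm_apply]
  ext w
  simp only [ContinuousLinearMap.coe_smul', Pi.smul_apply, toDual_apply_apply,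
    ContinuousLinearMap.coe_comp', Function.comp_apply, ContinuousLinearMap.prod_apply,
    ContinuousLinearMap.coe_id', id_eq, fderivInnerCLM_apply, real_inner_smul_left, smul_eq_mul]
  rw [real_inner_comm w z]
  ring

lemma nonint_aux {n : ℕ} (hn : 0 < n) (c₀ : ℝ) (hc₀ : 0 < c₀)
    (f : EuclideanSpace ℝ (Fin n) → ℝ)
    (hf : ∀ y : EuclideanSpace ℝ (Fin n), 2 ≤ ‖y‖ → c₀ * ‖y‖ ^ (-(n:ℝ)) ≤ f y) :
    ¬ IntegrableOn f {y : EuclideanSpace ℝ (Fin n) | 1 < ‖y‖} := by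
  intro h
  set u : EuclideanSpace ℝ (Fin n) := EuclideanSpace.single (⟨0, hn⟩ : Fin n) 1 with hu_def
  have hu : ‖u‖ = 1 := by simp [hu_def]
  set z : ℕ → EuclideanSpace ℝ (Fin n) := fun k => ((3 : ℝ) * 2 ^ k) • u with hz_def
  have hz : ∀ k, ‖z k‖ = 3 * 2 ^ k := by
    intro k
    rw [hz_def, norm_smul, hu, mul_one, Real.norm_eq_abs, abs_of_pos (by positivity)]
  set A : ℕ → Set (EuclideanSpace ℝ (Fin n)) :=
    fun k => Metric.closedBall (z k) (2 ^ k / 2) with hA_def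
  have hrange : ∀ k, ∀ x ∈ A k, (5/2) * 2 ^ k ≤ ‖x‖ ∧ ‖x‖ ≤ (7/2) * 2 ^ k := by
    intro k x hx
    have hd : ‖x - z k‖ ≤ 2 ^ k / 2 := by
      rwa [hA_def, Metric.mem_closedBall, dist_eq_norm] at hx
    have h2 : |‖x‖ - 3 * 2 ^ k| ≤ 2 ^ k / 2 := by
      rw [← hz k]; exact le_trans (abs_norm_sub_norm_le _ _) hd
    have h3 := abs_le.mp h2
    have hp : (0:ℝ) < 2 ^ k := by positivity
    constructor <;> linarith [h3.1, h3.2]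
  have hdisj : Pairwise (Function.onFun Disjoint A) := by
    have key : ∀ j k, j < k → Disjoint (A j) (A k) := by
      intro j k hjk
      rw [Set.disjoint_left]
      intro x hxj hxk
      have h1 := (hrange j x hxj).2
      have h2 := (hrange k x hxk).1
      have hp : (2:ℝ) ^ (j + 1) ≤ 2 ^ k := by
        apply pow_le_pow_right₀ one_le_two; omega
      rw [pow_succ] at hp
      have hq : (0:ℝ) < 2 ^ k := by positivity
      linarith
    intro j k hjk
    rcases lt_or_gt_of_ne hjk with hlt | hgt
    · exact key _ _ hlt
    · exact (key _ _ hgt).symm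
  have hk1 : ∀ k : ℕ, (1:ℝ) ≤ 2 ^ k := fun k => one_le_pow₀ one_le_two
  have hsub : ∀ k, A k ⊆ {y : EuclideanSpace ℝ (Fin n) | 1 < ‖y‖} := by
    intro k x hx
    have h1 := (hrange k x hx).1
    have := hk1 k
    simp only [Set.mem_setOf_eq]
    nlinarith
  have hmeas : ∀ k, MeasurableSet (A k) := fun k => measurableSet_closedBall
  have hvol : ∀ k, volume (A k)
      = ENNReal.ofReal ((2 ^ k / 2) ^ n) * volume (Metric.ball (0 : EuclideanSpace ℝ (Fin n)) 1) := by
    intro k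
    rw [hA_def]
    rw [Measure.addHaar_closedBall _ _ (by positivity), finrank_euclideanSpace_fin]
  have hlb : ∀ k, ENNReal.ofReal (c₀ * (8:ℝ)⁻¹ ^ n)
      * volume (Metric.ball (0 : EuclideanSpace ℝ (Fin n)) 1) ≤ ∫⁻ x in A k, ‖f x‖₊ := by
    intro k
    have hc : ∀ x ∈ A k, ENNReal.ofReal (c₀ * ((4:ℝ) * 2 ^ k) ^ (-(n:ℝ))) ≤ (‖f x‖₊ : ENNReal) := by
      intro x hx
      obtain ⟨hx1, hx2⟩ := hrange k x hx
      have h2x : (2:ℝ) ≤ ‖x‖ := by nlinarith [hk1 k]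
      have hxpos : (0:ℝ) < ‖x‖ := by linarith
      have hx4 : ‖x‖ ≤ (4:ℝ) * 2 ^ k := by nlinarith [hk1 k]
      have hmono : ((4:ℝ) * 2 ^ k) ^ (-(n:ℝ)) ≤ ‖x‖ ^ (-(n:ℝ)) :=
        Real.rpow_le_rpow_of_nonpos hxpos hx4 (by simp)
      have hle : c₀ * ((4:ℝ) * 2 ^ k) ^ (-(n:ℝ)) ≤ f x :=
        le_trans (mul_le_mul_of_nonneg_left hmono hc₀.le) (hf x h2x)
      calc ENNReal.ofReal (c₀ * ((4:ℝ) * 2 ^ k) ^ (-(n:ℝ)))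
          ≤ ENNReal.ofReal (f x) := ENNReal.ofReal_le_ofReal hle
        _ ≤ (‖f x‖₊ : ENNReal) := Real.ofReal_le_enorm (f x)
    have e1 : ((2:ℝ) ^ k / 2) / (4 * 2 ^ k) = 8⁻¹ := by
      have h2k : (2:ℝ) ^ k ≠ 0 := by positivity
      field_simp
      ring
    have e2 : ((8:ℝ)⁻¹) ^ n = ((2:ℝ) ^ k / 2) ^ n / (4 * 2 ^ k) ^ n := by
      rw [← div_pow, e1]
    calc ENNReal.ofReal (c₀ * (8:ℝ)⁻¹ ^ n) * volume (Metric.ball (0 : EuclideanSpace ℝ (Fin n)) 1)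
        = ENNReal.ofReal (c₀ * ((4:ℝ) * 2 ^ k) ^ (-(n:ℝ))) * volume (A k) := by
          rw [hvol k, ← mul_assoc, ← ENNReal.ofReal_mul (by positivity)]
          congr 2
          rw [Real.rpow_neg (by positivity), Real.rpow_natCast, e2]
          field_simp
      _ = ∫⁻ _x in A k, ENNReal.ofReal (c₀ * ((4:ℝ) * 2 ^ k) ^ (-(n:ℝ))) :=
          (setLIntegral_const _ _).symm
      _ ≤ ∫⁻ x in A k, ‖f x‖₊ := setLIntegral_mono' (hmeas k) hc
  have hfin : (∫⁻ x in {y : EuclideanSpace ℝ (Fin n) | 1 < ‖y‖}, ‖f x‖₊) < ⊤ := h.2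
  have hiU : (∫⁻ x in ⋃ k, A k, (‖f x‖₊ : ENNReal)) = ∑' k, ∫⁻ x in A k, ‖f x‖₊ :=
    lintegral_iUnion hmeas hdisj _
  have htop : (∑' _k : ℕ, ENNReal.ofReal (c₀ * (8:ℝ)⁻¹ ^ n)
      * volume (Metric.ball (0 : EuclideanSpace ℝ (Fin n)) 1)) = ⊤ := by
    apply ENNReal.tsum_const_eq_top_of_ne_zero
    apply mul_ne_zero
    · simp only [ne_eq, ENNReal.ofReal_eq_zero, not_le]
      positivity
    · exact (Metric.measure_ball_pos _ _ one_pos).ne'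
  have hcontr : (⊤ : ENNReal) ≤ ∫⁻ x in {y : EuclideanSpace ℝ (Fin n) | 1 < ‖y‖}, ‖f x‖₊ := by
    rw [← htop]
    calc (∑' _k : ℕ, ENNReal.ofReal (c₀ * (8:ℝ)⁻¹ ^ n)
          * volume (Metric.ball (0 : EuclideanSpace ℝ (Fin n)) 1))
        ≤ ∑' k, ∫⁻ x in A k, ‖f x‖₊ := ENNReal.tsum_le_tsum hlb
      _ = ∫⁻ x in ⋃ k, A k, ‖f x‖₊ := hiU.symm
      _ ≤ _ := lintegral_mono_set (Set.iUnion_subset hsub)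
  exact absurd (lt_of_le_of_lt hcontr hfin) (by simp)

lemma int_aux {n : ℕ} {r : ℝ} (hr : (n:ℝ) < r) (f : EuclideanSpace ℝ (Fin n) → ℝ)
    (hmeas : AEStronglyMeasurable f
      (volume.restrict {y : EuclideanSpace ℝ (Fin n) | 1 < ‖y‖}))
    (hbound : ∀ y : EuclideanSpace ℝ (Fin n), 1 < ‖y‖ → |f y| ≤ ‖y‖ ^ (-r)) :
    IntegrableOn f {y : EuclideanSpace ℝ (Fin n) | 1 < ‖y‖} := by
  have hr0 : 0 < r := lt_of_le_of_lt (Nat.cast_nonneg n) hr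
  have hS : MeasurableSet {y : EuclideanSpace ℝ (Fin n) | 1 < ‖y‖} :=
    (isOpen_lt continuous_const continuous_norm).measurableSet
  have hg : Integrable (fun y : EuclideanSpace ℝ (Fin n) => (2:ℝ) ^ r * (1 + ‖y‖) ^ (-r)) := by
    apply Integrable.const_mul
    apply integrable_one_add_norm
    rwa [finrank_euclideanSpace_fin]
  apply Integrable.mono' hg.integrableOn hmeas
  filter_upwards [ae_restrict_mem hS] with y hy
  have hy0 : (0:ℝ) < ‖y‖ := lt_trans one_pos hy
  have h1 : (1:ℝ) + ‖y‖ ≤ 2 * ‖y‖ := by linarith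
  have h2 : ((2:ℝ) * ‖y‖) ^ (-r) ≤ (1 + ‖y‖) ^ (-r) :=
    Real.rpow_le_rpow_of_nonpos (by linarith) h1 (by linarith)
  have h3 : ((2:ℝ) * ‖y‖) ^ (-r) = 2 ^ (-r) * ‖y‖ ^ (-r) :=
    Real.mul_rpow (by norm_num) (norm_nonneg _)
  have h4 : ‖y‖ ^ (-r) = 2 ^ r * ((2:ℝ) * ‖y‖) ^ (-r) := by
    rw [h3, ← mul_assoc, ← Real.rpow_add two_pos]
    simp
  rw [Real.norm_eq_abs]
  calc |f y| ≤ ‖y‖ ^ (-r) := hbound y hy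
    _ = 2 ^ r * ((2:ℝ) * ‖y‖) ^ (-r) := h4
    _ ≤ 2 ^ r * (1 + ‖y‖) ^ (-r) := by
        apply mul_le_mul_of_nonneg_left h2 (Real.rpow_nonneg (by norm_num) r)

set_option maxHeartbeats 1000000 in
/-- for `N ≥ 3`, `α > 0`, the stationary solution
`ψ₀(y) = |y|^{−(N−2)α/(2(2+α))} (1 − |y|^{−2(N−2)/(2+α)})` satisfies
(a) `div(b(y)∇ψ₀) + ((N−2)²α(4+α)/16)|y|⁻² ψ₀ = 0` for `|y| > 1`, and
(b) with `p_α = 2N(2+α)/(α(N−2))`, `ψ₀ ∈ L^{p_α+ε}({|y|>1})` for every `ε > 0` but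
`ψ₀ ∉ L^{p_α}({|y|>1})`. -/
theorem stmt_7 (N : ℕ) (hN : 3 ≤ N) (α : ℝ) (hα : 0 < α)
    (ψ : EuclideanSpace ℝ (Fin N) → ℝ)
    (hψ : ∀ y, ψ y = ‖y‖ ^ (-(((N : ℝ) - 2) * α / (2 * (2 + α))))
        * (1 - ‖y‖ ^ (-(2 * ((N : ℝ) - 2) / (2 + α)))))
    (b : EuclideanSpace ℝ (Fin N) → EuclideanSpace ℝ (Fin N) → EuclideanSpace ℝ (Fin N))
    (hb : ∀ y ξ, b y ξ = ξ + (α * (1 + α / 4) * ((inner ℝ y ξ : ℝ) / ‖y‖ ^ 2)) • y)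
    (pα : ℝ) (hpα : pα = 2 * N * (2 + α) / (α * ((N : ℝ) - 2))) :
    (∀ y : EuclideanSpace ℝ (Fin N), 1 < ‖y‖ →
      (∑ i : Fin N,
          fderiv ℝ (fun z => (b z (gradient ψ z)) i) y (EuclideanSpace.single i 1))
        + ((N : ℝ) - 2) ^ 2 * α * (4 + α) / 16 * (‖y‖ ^ (-(2 : ℝ)) * ψ y) = 0)
    ∧ (∀ ε > (0 : ℝ),
        IntegrableOn (fun y : EuclideanSpace ℝ (Fin N) => |ψ y| ^ (pα + ε))
          {y : EuclideanSpace ℝ (Fin N) | 1 < ‖y‖})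
    ∧ ¬ IntegrableOn (fun y : EuclideanSpace ℝ (Fin N) => |ψ y| ^ pα)
          {y : EuclideanSpace ℝ (Fin N) | 1 < ‖y‖} := by
  have hNR : (3:ℝ) ≤ (N:ℝ) := by exact_mod_cast hN
  have hN2 : (0:ℝ) < (N:ℝ) - 2 := by linarith
  have h2α : (0:ℝ) < 2 + α := by linarith
  set a : ℝ := -(((N : ℝ) - 2) * α / (2 * (2 + α))) with ha_def
  set c2 : ℝ := -(2 * ((N : ℝ) - 2) / (2 + α)) with hc2_def
  set d : ℝ := a + c2 with hd_def
  have ha_neg : a < 0 := by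
    rw [ha_def]
    have : 0 < ((N : ℝ) - 2) * α / (2 * (2 + α)) := by positivity
    linarith
  have hc2_neg : c2 < 0 := by
    rw [hc2_def]
    have : 0 < 2 * ((N : ℝ) - 2) / (2 + α) := by positivity
    linarith
  have hd_neg : d < 0 := by rw [hd_def]; linarith
  have hψ2 : ∀ y : EuclideanSpace ℝ (Fin N), ψ y = ‖y‖ ^ a - ‖y‖ ^ d := by
    intro y
    rw [hψ y]
    by_cases hy : y = 0
    · subst hy
      simp [Real.zero_rpow ha_neg.ne, Real.zero_rpow hc2_neg.ne, Real.zero_rpow hd_neg.ne]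
    · have hy0 : (0:ℝ) < ‖y‖ := norm_pos_iff.mpr hy
      rw [mul_sub, mul_one, ← Real.rpow_add hy0, hd_def]
  have hapα : a * pα = -(N:ℝ) := by
    rw [ha_def, hpα]
    field_simp
  have hppos : 0 < pα := by rw [hpα]; positivity
  refine ⟨?_, ?_, ?_⟩
  · -- part (a)
    intro y hy
    have hy0 : y ≠ 0 := by
      intro h; rw [h, norm_zero] at hy; linarith
    have hR : (0:ℝ) < ‖y‖ := lt_trans one_pos hy
    have hs2 : (0:ℝ) < ‖y‖ ^ 2 := by positivity
    set K : ℝ := 1 + α * (1 + α / 4) with hK_def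
    have hgrad : ∀ z : EuclideanSpace ℝ (Fin N), z ≠ 0 → gradient ψ z
        = (a * (‖z‖ ^ 2) ^ (a / 2 - 1) - d * (‖z‖ ^ 2) ^ (d / 2 - 1)) • z :=
      fun z hz => (grad_aux a d ψ hψ2 z hz).gradient
    have hbg : ∀ z : EuclideanSpace ℝ (Fin N), z ≠ 0 → b z (gradient ψ z)
        = (K * (a * (‖z‖ ^ 2) ^ (a / 2 - 1) - d * (‖z‖ ^ 2) ^ (d / 2 - 1))) • z := by
      intro z hz
      have hz2 : (‖z‖:ℝ) ^ 2 ≠ 0 := by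
        have : ‖z‖ ≠ 0 := norm_ne_zero_iff.mpr hz
        positivity
      rw [hgrad z hz, hb, real_inner_smul_right, real_inner_self_eq_norm_sq, ← add_smul]
      congr 1
      field_simp
      ring
    have hterm : ∀ i : Fin N,
        fderiv ℝ (fun z => (b z (gradient ψ z)) i) y (EuclideanSpace.single i 1)
        = K * (a * (‖y‖ ^ 2) ^ (a / 2 - 1) - d * (‖y‖ ^ 2) ^ (d / 2 - 1))
          + (y i * y i) * (2 * (K * (a * ((a / 2 - 1) * (‖y‖ ^ 2) ^ (a / 2 - 1 - 1))
            - d * ((d / 2 - 1) * (‖y‖ ^ 2) ^ (d / 2 - 1 - 1))))) := by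
      intro i
      have hev : (fun z => (b z (gradient ψ z)) i) =ᶠ[nhds y]
          (fun z : EuclideanSpace ℝ (Fin N) =>
            (K * (a * (‖z‖ ^ 2) ^ (a / 2 - 1) - d * (‖z‖ ^ 2) ^ (d / 2 - 1))) * z i) := by
        filter_upwards [IsOpen.mem_nhds isOpen_compl_singleton hy0] with z hz
        rw [hbg z hz]
        rfl
      rw [hev.fderiv_eq]
      have hqd : HasFDerivAt (fun z : EuclideanSpace ℝ (Fin N) => ⟪z, z⟫)
          ((fderivInnerCLM ℝ (y, y)).comp
            ((ContinuousLinearMap.id ℝ (EuclideanSpace ℝ (Fin N))).prod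
              (ContinuousLinearMap.id ℝ (EuclideanSpace ℝ (Fin N))))) y :=
        (hasFDerivAt_id y).inner ℝ (hasFDerivAt_id y)
      have hh : HasDerivAt (fun t : ℝ => K * (a * t ^ (a / 2 - 1) - d * t ^ (d / 2 - 1)))
          (K * (a * ((a / 2 - 1) * (‖y‖ ^ 2) ^ (a / 2 - 1 - 1))
            - d * ((d / 2 - 1) * (‖y‖ ^ 2) ^ (d / 2 - 1 - 1)))) (⟪y, y⟫) := by
        have h1 := (((Real.hasDerivAt_rpow_const (x := ‖y‖ ^ 2) (p := a / 2 - 1)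
            (Or.inl hs2.ne')).const_mul a).sub
          ((Real.hasDerivAt_rpow_const (x := ‖y‖ ^ 2) (p := d / 2 - 1)
            (Or.inl hs2.ne')).const_mul d)).const_mul K
        rw [real_inner_self_eq_norm_sq]
        convert h1 using 1
        all_goals rfl
      have hproj : HasFDerivAt (fun z : EuclideanSpace ℝ (Fin N) => z i)
          (EuclideanSpace.proj (𝕜 := ℝ) i) y :=
        (EuclideanSpace.proj (𝕜 := ℝ) i).hasFDerivAt.congr_of_eventuallyEq
          (Filter.Eventually.of_forall (fun z => by simp))
      have hmul := (hh.comp_hasFDerivAt (f := fun z : EuclideanSpace ℝ (Fin N) => ⟪z, z⟫) y hqd).mul hproj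
      have hmul' := hmul.congr_of_eventuallyEq
        (f₁ := fun z : EuclideanSpace ℝ (Fin N) =>
          (K * (a * (‖z‖ ^ 2) ^ (a / 2 - 1) - d * (‖z‖ ^ 2) ^ (d / 2 - 1))) * z i)
        (Filter.Eventually.of_forall (fun z : EuclideanSpace ℝ (Fin N) => by
          simp only [Pi.mul_apply, Function.comp_apply, real_inner_self_eq_norm_sq]))
      rw [hmul'.fderiv]
      simp only [ContinuousLinearMap.add_apply, ContinuousLinearMap.coe_smul',
        Pi.smul_apply, smul_eq_mul, ContinuousLinearMap.coe_comp', Function.comp_apply,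
        ContinuousLinearMap.prod_apply, ContinuousLinearMap.coe_id', id_eq,
        fderivInnerCLM_apply, PiLp.proj_apply, EuclideanSpace.single_apply,
        eq_self_iff_true, if_true, EuclideanSpace.inner_single_right, EuclideanSpace.inner_single_left,
        map_one, one_mul, mul_one, real_inner_self_eq_norm_sq, conj_trivial]
      ring
    rw [Finset.sum_congr rfl (fun i _ => hterm i), Finset.sum_add_distrib,
      Finset.sum_const, Finset.card_univ, Fintype.card_fin, ← Finset.sum_mul]
    have hsum : (∑ i : Fin N, y i * y i) = ‖y‖ ^ 2 := by
      have h := real_inner_self_eq_norm_sq y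
      rw [PiLp.inner_apply] at h
      simpa [RCLike.inner_apply, conj_trivial, sq] using h
    rw [hsum, hψ2 y]
    have hRpow : ∀ t : ℝ, ((‖y‖:ℝ) ^ 2) ^ t = ‖y‖ ^ (2 * t) := fun t => by
      rw [show ((‖y‖:ℝ) ^ 2) = ‖y‖ ^ ((2:ℕ):ℝ) from (Real.rpow_natCast _ 2).symm,
        ← Real.rpow_mul (norm_nonneg y)]
      norm_num
    set X : ℝ := ‖y‖ ^ (a - 2) with hX_def
    set Y : ℝ := ‖y‖ ^ (d - 2) with hY_def
    have e1 : ((‖y‖:ℝ) ^ 2) ^ (a / 2 - 1) = X := by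
      rw [hRpow, hX_def]; congr 1; ring
    have e2 : ((‖y‖:ℝ) ^ 2) ^ (d / 2 - 1) = Y := by
      rw [hRpow, hY_def]; congr 1; ring
    have emid : (‖y‖:ℝ) ^ 2 * (2 * (K * (a * ((a / 2 - 1) * (‖y‖ ^ 2) ^ (a / 2 - 1 - 1))
          - d * ((d / 2 - 1) * (‖y‖ ^ 2) ^ (d / 2 - 1 - 1)))))
        = 2 * (K * (a * ((a / 2 - 1) * X) - d * ((d / 2 - 1) * Y))) := by
      rw [hRpow (a / 2 - 1 - 1), hRpow (d / 2 - 1 - 1)]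
      have f1 : (‖y‖:ℝ) ^ 2 * ‖y‖ ^ (2 * (a / 2 - 1 - 1)) = X := by
        rw [show ((‖y‖:ℝ) ^ 2) = ‖y‖ ^ ((2:ℕ):ℝ) from (Real.rpow_natCast _ 2).symm,
          ← Real.rpow_add hR, hX_def]
        congr 1; push_cast; ring
      have f2 : (‖y‖:ℝ) ^ 2 * ‖y‖ ^ (2 * (d / 2 - 1 - 1)) = Y := by
        rw [show ((‖y‖:ℝ) ^ 2) = ‖y‖ ^ ((2:ℕ):ℝ) from (Real.rpow_natCast _ 2).symm,
          ← Real.rpow_add hR, hY_def]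
        congr 1; push_cast; ring
      linear_combination (2 * K * a * (a / 2 - 1)) * f1 - (2 * K * d * (d / 2 - 1)) * f2
    have elast : (‖y‖:ℝ) ^ (-(2:ℝ)) * (‖y‖ ^ a - ‖y‖ ^ d) = X - Y := by
      rw [mul_sub, ← Real.rpow_add hR, ← Real.rpow_add hR, hX_def, hY_def,
        show -(2:ℝ) + a = a - 2 by ring, show -(2:ℝ) + d = d - 2 by ring]
    rw [e1, e2, emid, elast, nsmul_eq_mul]
    have hA : K * ((N:ℝ) * a + a * (a - 2) + (a - 2) * a - (a - 2) * a)
        + ((N : ℝ) - 2) ^ 2 * α * (4 + α) / 16 = 0 := by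
      rw [hK_def, ha_def]
      field_simp
      ring
    have hB : K * ((N:ℝ) * d + d * (d - 2) + (d - 2) * d - (d - 2) * d)
        + ((N : ℝ) - 2) ^ 2 * α * (4 + α) / 16 = 0 := by
      rw [hK_def, hd_def, ha_def, hc2_def]
      field_simp
      ring
    linear_combination X * hA - Y * hB
  · -- part (b1)
    intro ε hε
    set r : ℝ := -(a * (pα + ε)) with hr_def
    have hr : (N:ℝ) < r := by
      have h1 : 0 < (-a) * ε := mul_pos (neg_pos.mpr ha_neg) hε
      rw [hr_def]
      nlinarith [hapα]
    have hS : MeasurableSet {y : EuclideanSpace ℝ (Fin N) | 1 < ‖y‖} :=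
      (isOpen_lt continuous_const continuous_norm).measurableSet
    have hcont : ContinuousOn (fun y : EuclideanSpace ℝ (Fin N) => |ψ y| ^ (pα + ε))
        {y : EuclideanSpace ℝ (Fin N) | 1 < ‖y‖} := by
      have hfun : (fun y : EuclideanSpace ℝ (Fin N) => |ψ y| ^ (pα + ε))
          = fun y : EuclideanSpace ℝ (Fin N) => |‖y‖ ^ a - ‖y‖ ^ d| ^ (pα + ε) := by
        funext y; rw [hψ2 y]
      rw [hfun]
      apply ContinuousOn.rpow_const
      · apply ContinuousOn.abs
        apply ContinuousOn.sub <;>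
          exact continuous_norm.continuousOn.rpow_const
            (fun y hy => Or.inl (ne_of_gt (lt_trans one_pos hy)))
      · intro y _
        right
        positivity
    apply int_aux hr _ (hcont.aestronglyMeasurable hS)
    intro y hy
    have hy0 : (0:ℝ) < ‖y‖ := lt_trans one_pos hy
    have hc2y : ‖y‖ ^ c2 ≤ 1 :=
      Real.rpow_le_one_of_one_le_of_nonpos hy.le hc2_neg.le
    have hc2ypos : 0 < ‖y‖ ^ c2 := Real.rpow_pos_of_pos hy0 _
    have habs : |ψ y| ≤ ‖y‖ ^ a := by
      rw [hψ y, abs_mul, abs_of_pos (Real.rpow_pos_of_pos hy0 a)]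
      have h1 : |1 - ‖y‖ ^ c2| ≤ 1 := by
        rw [abs_of_nonneg (by linarith)]; linarith
      nlinarith [Real.rpow_pos_of_pos hy0 a]
    have h2 : |ψ y| ^ (pα + ε) ≤ (‖y‖ ^ a) ^ (pα + ε) :=
      Real.rpow_le_rpow (abs_nonneg _) habs (by linarith)
    have h3 : ((‖y‖:ℝ) ^ a) ^ (pα + ε) = ‖y‖ ^ (-r) := by
      rw [← Real.rpow_mul (norm_nonneg y), hr_def, neg_neg]
    rw [abs_of_nonneg (Real.rpow_nonneg (abs_nonneg _) _)]
    rw [h3] at h2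
    exact h2
  · -- part (b2)
    have h2c2 : (2:ℝ) ^ c2 < 1 :=
      Real.rpow_lt_one_of_one_lt_of_neg one_lt_two hc2_neg
    have h2c2pos : (0:ℝ) < 2 ^ c2 := Real.rpow_pos_of_pos two_pos _
    set c₀ : ℝ := (1 - 2 ^ c2) ^ pα with hc₀_def
    have hc₀ : 0 < c₀ := Real.rpow_pos_of_pos (by linarith) _
    apply nonint_aux (by omega) c₀ hc₀
    intro y hy
    have hy0 : (0:ℝ) < ‖y‖ := lt_of_lt_of_le two_pos hy
    have hmono : ‖y‖ ^ c2 ≤ 2 ^ c2 :=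
      Real.rpow_le_rpow_of_nonpos two_pos hy hc2_neg.le
    have hfac : 0 < 1 - ‖y‖ ^ c2 := by linarith
    have heq : |ψ y| ^ pα = ‖y‖ ^ (-(N:ℝ)) * (1 - ‖y‖ ^ c2) ^ pα := by
      rw [hψ y, abs_of_nonneg (by positivity),
        Real.mul_rpow (Real.rpow_nonneg (norm_nonneg _) _) hfac.le,
        ← Real.rpow_mul (norm_nonneg y), hapα]
    rw [heq]
    have h5 : c₀ ≤ (1 - ‖y‖ ^ c2) ^ pα := by
      rw [hc₀_def]
      exact Real.rpow_le_rpow (by linarith) (by linarith) hppos.le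
    have h6 : 0 ≤ (‖y‖:ℝ) ^ (-(N:ℝ)) := Real.rpow_nonneg (norm_nonneg _) _
    calc c₀ * ‖y‖ ^ (-(N:ℝ)) ≤ (1 - ‖y‖ ^ c2) ^ pα * ‖y‖ ^ (-(N:ℝ)) :=
          mul_le_mul_of_nonneg_right h5 h6
      _ = ‖y‖ ^ (-(N:ℝ)) * (1 - ‖y‖ ^ c2) ^ pα := mul_comm _ _
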